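/- Let M be a simple binary matroid with no coloops that is k-paving. Then the ground set of M is a circuit of M, or r(M) ≤ 3k + 1. -/

import Mathlib

namespace Matroid

variable {α : Type*}

/-- A circuit of a matroid is a minimal dependent set. -/
def Circuit (M : Matroid α) (C : Set α) : Prop :=
  M.Dep C ∧ ∀ D, D ⊂ C → M.Indep D

/-- A coloop is an element belonging to every basis. -/
def Coloop (M : Matroid α) (e : α) : Prop :=
  e ∈ M.E ∧ ∀ B, M.IsBase B → e ∈ B

/-- A matroid is simple if every subset of the ground set with at most two
elements is independent. -/
def Simple (M : Matroid α) : Prop :=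
  ∀ e ∈ M.E, ∀ f ∈ M.E, M.Indep {e, f}

/-- The rank of a matroid: the supremum of the cardinalities of its bases. -/
noncomputable def rk (M : Matroid α) : ℕ :=
  sSup {n | ∃ B, M.IsBase B ∧ B.ncard = n}

/-- A matroid is representable over a field `F` if independence in `M` coincides
with linear independence under some assignment of vectors to ground set elements. -/
def RepresentableOver (M : Matroid α) (F : Type) [Field F] : Prop :=
  ∃ (n : ℕ) (φ : α → (Fin n → F)),
    ∀ I, I ⊆ M.E → (M.Indep I ↔ LinearIndependent F (fun x : I => φ x))

/-- An element `e` is `k`-loose if every circuit containing `e` has size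
greater than `r - k`, where `r` is the rank of the matroid. -/
def KLoose (M : Matroid α) (k : ℕ) (e : α) : Prop :=
  e ∈ M.E ∧ ∀ C, M.Circuit C → e ∈ C → M.rk - k < C.ncard

/-- A matroid is `k`-paving if every element is `k`-loose. -/
def KPaving (M : Matroid α) (k : ℕ) : Prop :=
  ∀ e ∈ M.E, M.KLoose k e

end Matroid

namespace BPAux

open Matroid Set

variable {α : Type*} {M : Matroid α} [M.Finite] {n : ℕ} {φ : α → Fin n → ZMod 2}

lemma zmod2 : ∀ a : ZMod 2, a = 0 ∨ a = 1 := by decide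

/-- bridge: independent sets have no nonempty zero-sum subsets. -/
lemma sum_ne_zero_of_indep
    (hφ : ∀ I, I ⊆ M.E → (M.Indep I ↔ LinearIndependent (ZMod 2) (fun x : I => φ x)))
    {S : Set α} (hSE : S ⊆ M.E) (hi : M.Indep S) {T : Finset α}
    (hTS : ↑T ⊆ S) (hT : T.Nonempty) : ∑ x ∈ T, φ x ≠ 0 := by
  classical
  have hSfin : S.Finite := M.ground_finite.subset hSE
  haveI : Fintype S := hSfin.fintype
  have hli := (hφ S hSE).1 hi
  intro h0
  set g : S → ZMod 2 := fun i => if (i : α) ∈ T then 1 else 0 with hg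
  have hsum : ∑ i : S, g i • φ (i : α) = ∑ x ∈ T, φ x := by
    have h1 : ∀ i : S, g i • φ (i : α) = if (i : α) ∈ T then φ (i : α) else 0 := by
      intro i; by_cases h : (i : α) ∈ T <;> simp [hg, h]
    rw [Finset.sum_congr rfl (fun i _ => h1 i)]
    have h2 := Finset.sum_subtype (p := fun x => x ∈ S) (F := ‹Fintype S›) hSfin.toFinset
      (fun x => hSfin.mem_toFinset) (fun x => if x ∈ T then φ x else 0)
    rw [← h2, Finset.sum_ite_mem, Finset.inter_eq_right.2
      (fun x hx => hSfin.mem_toFinset.2 (hTS hx))]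
  obtain ⟨t, ht⟩ := hT
  have := Fintype.linearIndependent_iff.1 hli g (by rw [hsum]; exact h0) ⟨t, hTS ht⟩
  simp [hg, ht] at this

lemma dep_of_zero_sum
    (hφ : ∀ I, I ⊆ M.E → (M.Indep I ↔ LinearIndependent (ZMod 2) (fun x : I => φ x)))
    {T : Finset α} (hTE : ↑T ⊆ M.E) (hT : T.Nonempty) (h0 : ∑ x ∈ T, φ x = 0) :
    M.Dep (↑T : Set α) :=
  ⟨fun hi => sum_ne_zero_of_indep hφ hTE hi subset_rfl hT h0, hTE⟩

lemma circuit_zero_sum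
    (hφ : ∀ I, I ⊆ M.E → (M.Indep I ↔ LinearIndependent (ZMod 2) (fun x : I => φ x)))
    {C : Set α} (hC : M.Circuit C) (F : Finset α) (hF : ↑F = C) :
    ∑ x ∈ F, φ x = 0 := by
  classical
  have hCE : C ⊆ M.E := hC.1.subset_ground
  have hCfin : C.Finite := M.ground_finite.subset hCE
  haveI : Fintype C := hCfin.fintype
  have hnli : ¬ LinearIndependent (ZMod 2) (fun x : C => φ x) :=
    fun h => hC.1.not_indep ((hφ C hCE).2 h)
  obtain ⟨g, hgsum, i₀, hi₀⟩ := Fintype.not_linearIndependent_iff.1 hnli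
  set T : Finset α := F.filter (fun x => ∀ h : x ∈ C, g ⟨x, h⟩ = 1) with hT
  have hTC : ↑T ⊆ C := by
    intro x hx
    have : x ∈ F := Finset.mem_of_mem_filter _ (by exact_mod_cast hx)
    rw [← hF]; exact_mod_cast this
  have hTsum : ∑ x ∈ T, φ x = 0 := by
    rw [← hgsum, hT, Finset.sum_filter]
    rw [Finset.sum_subtype (p := fun x => x ∈ C) (F := ‹Fintype C›) F
      (fun x => by rw [← hF]; exact Iff.rfl)
      (fun x => if (∀ h : x ∈ C, g ⟨x, h⟩ = 1) then φ x else 0)]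
    apply Finset.sum_congr rfl
    intro i _
    rcases zmod2 (g i) with h | h
    · rw [if_neg, h, zero_smul]
      intro hall
      have := hall i.2
      rw [Subtype.coe_eta] at this
      rw [this] at h; exact absurd h (by decide)
    · rw [if_pos, h, one_smul]
      intro hm
      rw [Subtype.coe_eta]; exact h
  have hTne : T.Nonempty := by
    refine ⟨(i₀ : α), ?_⟩
    rw [hT, Finset.mem_filter]
    refine ⟨by rw [← Finset.mem_coe, hF]; exact i₀.2, ?_⟩
    intro h
    rw [Subtype.coe_eta]
    rcases zmod2 (g i₀) with h' | h'
    · exact absurd h' hi₀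
    · exact h'
  have hTeq : (↑T : Set α) = C := by
    by_contra hne
    have hss : (↑T : Set α) ⊂ C := ssubset_of_subset_of_ne hTC hne
    exact sum_ne_zero_of_indep hφ (hTC.trans hCE) (hC.2 _ hss) subset_rfl hTne hTsum
  have : T = F := Finset.coe_injective (by rw [hTeq, hF])
  rw [← this]; exact hTsum

lemma exists_circuit_subset {S : Set α} (hS : M.Dep S) : ∃ C, C ⊆ S ∧ M.Circuit C := by
  classical
  have H : ∀ N, ∀ S : Set α, S.ncard ≤ N → M.Dep S → ∃ C, C ⊆ S ∧ M.Circuit C := by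
    intro N
    induction N with
    | zero =>
      intro S hcard hdep
      have hfin : S.Finite := M.ground_finite.subset hdep.subset_ground
      have : S = ∅ := (ncard_eq_zero hfin).1 (Nat.le_antisymm hcard (Nat.zero_le _))
      rw [this] at hdep
      exact absurd M.empty_indep hdep.not_indep
    | succ N ih =>
      intro S hcard hdep
      by_cases h : ∀ D, D ⊂ S → M.Indep D
      · exact ⟨S, subset_rfl, hdep, h⟩
      · push_neg at h
        obtain ⟨D, hDS, hD⟩ := h
        have hfin : S.Finite := M.ground_finite.subset hdep.subset_ground
        have hdepD : M.Dep D := ⟨hD, hDS.subset.trans hdep.subset_ground⟩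
        have hlt : D.ncard < S.ncard := ncard_lt_ncard hDS hfin
        obtain ⟨C, hCD, hC⟩ := ih D (by omega) hdepD
        exact ⟨C, hCD.trans hDS.subset, hC⟩
  exact H S.ncard S le_rfl hS

lemma base_ncard_eq_rk {B : Set α} (hB : M.IsBase B) : B.ncard = M.rk := by
  have hset : {m | ∃ B', M.IsBase B' ∧ B'.ncard = m} = {B.ncard} := by
    ext m
    simp only [mem_setOf_eq, mem_singleton_iff]
    constructor
    · rintro ⟨B', hB', rfl⟩; exact hB'.ncard_eq_ncard_of_isBase hB
    · rintro rfl; exact ⟨B, hB, rfl⟩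
  rw [Matroid.rk, hset, csSup_singleton]

lemma indep_ncard_le_rk {I : Set α} (hI : M.Indep I) : I.ncard ≤ M.rk := by
  obtain ⟨B, hB, hIB⟩ := hI.exists_isBase_superset
  rw [← base_ncard_eq_rk hB]
  exact ncard_le_ncard hIB (M.ground_finite.subset hB.subset_ground)

lemma circuit_ncard_le {C : Set α} (hC : M.Circuit C) : C.ncard ≤ M.rk + 1 := by
  obtain ⟨e, he⟩ := hC.1.nonempty
  have hfin : C.Finite := M.ground_finite.subset hC.1.subset_ground
  have hind : M.Indep (C \ {e}) := hC.2 _ (sdiff_singleton_ssubset.2 he)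
  have h1 : (C \ {e}).ncard = C.ncard - 1 := ncard_diff_singleton_of_mem he
  have h2 := indep_ncard_le_rk hind
  have h3 : 1 ≤ C.ncard := (ncard_pos hfin).2 ⟨e, he⟩
  omega

lemma exists_circuit_of_not_coloop {e : α} (he : e ∈ M.E) (hc : ¬ M.Coloop e) :
    ∃ C, M.Circuit C ∧ e ∈ C := by
  have h : ¬ ∀ B, M.IsBase B → e ∈ B := fun h => hc ⟨he, h⟩
  push_neg at h
  obtain ⟨B, hB, heB⟩ := h
  obtain ⟨C, hCsub, hC⟩ := exists_circuit_subset (hB.insert_dep ⟨he, heB⟩)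
  have heC : e ∈ C := by
    by_contra h'
    have hCB : C ⊆ B := by
      intro x hx
      rcases hCsub hx with rfl | hxB
      · exact absurd hx h'
      · exact hxB
    exact hC.1.not_indep (hB.indep.subset hCB)
  exact ⟨C, hC, heC⟩

end BPAux

/-- A simple binary matroid with no coloops that is `k`-paving is a circuit, or has
rank at most `3k + 1`. -/
theorem binary_paving_rank_bound {α : Type*} (k : ℕ) (M : Matroid α) [M.Finite]
    (hsimple : M.Simple) (hbinary : M.RepresentableOver (ZMod 2))
    (hcoloop : ∀ x, ¬ M.Coloop x) (hpaving : M.KPaving k) :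
    M.Circuit M.E ∨ M.rk ≤ 3 * k + 1 := by
  classical
  by_cases hrk : M.rk ≤ 3 * k + 1
  · exact Or.inr hrk
  push_neg at hrk
  obtain ⟨n, φ, hφ⟩ := hbinary
  have hEfin : M.E.Finite := M.ground_finite
  by_cases h2 : ∃ C₁ C₂, M.Circuit C₁ ∧ M.Circuit C₂ ∧ C₁ ≠ C₂
  · exfalso
    have hQne : {m | ∃ C₁ C₂, M.Circuit C₁ ∧ M.Circuit C₂ ∧ C₁ ≠ C₂ ∧
        (C₁ ∪ C₂).ncard = m}.Nonempty := by
      obtain ⟨C₁, C₂, h1, h2', h3⟩ := h2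
      exact ⟨_, C₁, C₂, h1, h2', h3, rfl⟩
    obtain ⟨C₁, C₂, hC₁, hC₂, hne, hm⟩ := Nat.sInf_mem hQne
    have hmin : ∀ D₁ D₂, M.Circuit D₁ → M.Circuit D₂ → D₁ ≠ D₂ →
        (C₁ ∪ C₂).ncard ≤ (D₁ ∪ D₂).ncard := by
      intro D₁ D₂ h1 h2' h3
      rw [hm]
      exact Nat.sInf_le ⟨D₁, D₂, h1, h2', h3, rfl⟩
    have hC₁E := hC₁.1.subset_ground
    have hC₂E := hC₂.1.subset_ground
    set U : Set α := C₁ ∪ C₂ with hU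
    have hUE : U ⊆ M.E := Set.union_subset hC₁E hC₂E
    have hUfin : U.Finite := hEfin.subset hUE
    have hC₁fin : C₁.Finite := hEfin.subset hC₁E
    have hC₂fin : C₂.Finite := hEfin.subset hC₂E
    set Δ : Set α := (C₁ \ C₂) ∪ (C₂ \ C₁) with hΔ
    have hΔU : Δ ⊆ U := Set.union_subset
      (Set.diff_subset.trans Set.subset_union_left)
      (Set.diff_subset.trans Set.subset_union_right)
    have hΔfin : Δ.Finite := hUfin.subset hΔU
    have hΔne : Δ.Nonempty := by
      by_contra h
      rw [Set.not_nonempty_iff_eq_empty, hΔ, Set.union_empty_iff] at h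
      exact hne (subset_antisymm (Set.diff_eq_empty.1 h.1) (Set.diff_eq_empty.1 h.2))
    have hs₁ : ∑ x ∈ hC₁fin.toFinset, φ x = 0 :=
      BPAux.circuit_zero_sum hφ hC₁ _ hC₁fin.coe_toFinset
    have hs₂ : ∑ x ∈ hC₂fin.toFinset, φ x = 0 :=
      BPAux.circuit_zero_sum hφ hC₂ _ hC₂fin.coe_toFinset
    have hΔF : hΔfin.toFinset =
        (hC₁fin.toFinset ∪ hC₂fin.toFinset) \ (hC₁fin.toFinset ∩ hC₂fin.toFinset) := by
      apply Finset.coe_injective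
      simp only [Set.Finite.coe_toFinset, Finset.coe_sdiff, Finset.coe_union, Finset.coe_inter,
        Set.Finite.coe_toFinset, hΔ]
      ext x
      simp only [Set.mem_union, Set.mem_diff, Set.mem_inter_iff]
      tauto
    have hsΔ : ∑ x ∈ hΔfin.toFinset, φ x = 0 := by
      set A := hC₁fin.toFinset with hA
      set B := hC₂fin.toFinset with hB
      have hui : ∑ x ∈ A ∪ B, φ x + ∑ x ∈ A ∩ B, φ x = ∑ x ∈ A, φ x + ∑ x ∈ B, φ x :=
        Finset.sum_union_inter
      have hsplit : ∑ x ∈ A ∪ B, φ x =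
          ∑ x ∈ (A ∪ B) \ (A ∩ B), φ x + ∑ x ∈ A ∩ B, φ x := by
        rw [← Finset.sum_union Finset.sdiff_disjoint]
        congr 1
        rw [Finset.sdiff_union_of_subset]
        intro x hx
        exact Finset.mem_union_left _ (Finset.mem_inter.1 hx).1
      have h2v : ∀ v : Fin n → ZMod 2, v + v = 0 := by
        intro v
        rw [← two_smul (ZMod 2) v, show (2 : ZMod 2) = 0 by decide, zero_smul]
      rw [hΔF]
      calc ∑ x ∈ (A ∪ B) \ (A ∩ B), φ x
          = ∑ x ∈ (A ∪ B) \ (A ∩ B), φ x + (∑ x ∈ A ∩ B, φ x + ∑ x ∈ A ∩ B, φ x) := by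
            rw [h2v, add_zero]
        _ = (∑ x ∈ (A ∪ B) \ (A ∩ B), φ x + ∑ x ∈ A ∩ B, φ x) + ∑ x ∈ A ∩ B, φ x := by
            rw [add_assoc]
        _ = ∑ x ∈ A ∪ B, φ x + ∑ x ∈ A ∩ B, φ x := by rw [← hsplit]
        _ = ∑ x ∈ A, φ x + ∑ x ∈ B, φ x := hui
        _ = 0 := by rw [hs₁, hs₂, add_zero]
    have hΔE : Δ ⊆ M.E := hΔU.trans hUE
    have hΔdep : M.Dep Δ := by
      have hd := BPAux.dep_of_zero_sum hφ (T := hΔfin.toFinset)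
        (by rw [hΔfin.coe_toFinset]; exact hΔE)
        (by obtain ⟨x, hx⟩ := hΔne; exact ⟨x, hΔfin.mem_toFinset.2 hx⟩) hsΔ
      rwa [hΔfin.coe_toFinset] at hd
    obtain ⟨C₃, hC₃Δ, hC₃⟩ := BPAux.exists_circuit_subset hΔdep
    have hclass : ∀ D, M.Circuit D → D ⊆ U → D = C₁ ∨ D = C₂ ∨ D = Δ := by
      intro D hD hDU
      by_cases hd1 : D = C₁
      · exact Or.inl hd1
      by_cases hd2 : D = C₂
      · exact Or.inr (Or.inl hd2)
      refine Or.inr (Or.inr ?_)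
      have e1 : C₁ ∪ D = U := by
        apply Set.eq_of_subset_of_ncard_le
          (Set.union_subset Set.subset_union_left hDU) _ hUfin
        exact hmin C₁ D hC₁ hD (Ne.symm hd1)
      have e2 : C₂ ∪ D = U := by
        apply Set.eq_of_subset_of_ncard_le
          (Set.union_subset Set.subset_union_right hDU) _ hUfin
        exact hmin C₂ D hC₂ hD (Ne.symm hd2)
      have hΔD : Δ ⊆ D := by
        rw [hΔ]
        rintro x (⟨hx1, hx2⟩ | ⟨hx1, hx2⟩)
        · have hxU : x ∈ U := by rw [hU]; exact Or.inl hx1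
          rw [← e2] at hxU
          rcases hxU with h | h
          · exact absurd h hx2
          · exact h
        · have hxU : x ∈ U := by rw [hU]; exact Or.inr hx1
          rw [← e1] at hxU
          rcases hxU with h | h
          · exact absurd h hx2
          · exact h
      have hC₃D : C₃ = D := by
        by_contra hne3
        exact hC₃.1.not_indep (hD.2 _ (ssubset_of_subset_of_ne (hC₃Δ.trans hΔD) hne3))
      exact subset_antisymm (hC₃D ▸ hC₃Δ) hΔD
    obtain ⟨I, hI⟩ := M.exists_isBasis U hUE
    have hIU : I ⊆ U := hI.subset
    have hIfin : I.Finite := hUfin.subset hIU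
    have hUI2 : (U \ I).ncard ≤ 2 := by
      by_contra hgt
      push_neg at hgt
      obtain ⟨u, hu, v, hv, w, hw, huv, huw, hvw⟩ :=
        (Set.two_lt_ncard (hUfin.diff (t := I))).1 hgt
      have hDel : ∀ a ∈ U \ I, ∃ D, M.Circuit D ∧ D ⊆ insert a I ∧ a ∈ D ∧
          (D = C₁ ∨ D = C₂ ∨ D = Δ) := by
        intro a ha
        obtain ⟨D, hDsub, hD⟩ := BPAux.exists_circuit_subset (hI.insert_dep ha)
        have haD : a ∈ D := by
          by_contra h'
          refine hD.1.not_indep (hI.indep.subset ?_)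
          intro x hx
          rcases hDsub hx with rfl | hxI
          · exact absurd hx h'
          · exact hxI
        have hDU : D ⊆ U := hDsub.trans (Set.insert_subset ha.1 hIU)
        exact ⟨D, hD, hDsub, haD, hclass D hD hDU⟩
      obtain ⟨Du, hDu, hDuI, huDu, hu'⟩ := hDel u hu
      obtain ⟨Dv, hDv, hDvI, hvDv, hv'⟩ := hDel v hv
      obtain ⟨Dw, hDw, hDwI, hwDw, hw'⟩ := hDel w hw
      have hne_uv : Du ≠ Dv := by
        intro h; rw [h] at huDu
        rcases hDvI huDu with rfl | h'
        · exact huv rfl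
        · exact hu.2 h'
      have hne_uw : Du ≠ Dw := by
        intro h; rw [h] at huDu
        rcases hDwI huDu with rfl | h'
        · exact huw rfl
        · exact hu.2 h'
      have hne_vw : Dv ≠ Dw := by
        intro h; rw [h] at hvDv
        rcases hDwI hvDv with rfl | h'
        · exact hvw rfl
        · exact hv.2 h'
      have contra : ∀ (a b c : α) (Da Db Dc : Set α), a ≠ b → a ≠ c → a ∉ I → a ∈ Da →
          Da = Δ → Db ⊆ insert b I → Dc ⊆ insert c I →
          ((Db = C₁ ∧ Dc = C₂) ∨ (Db = C₂ ∧ Dc = C₁)) → False := by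
        intro a b c Da Db Dc hab hac haI haDa hDaΔ hDb hDc hor
        have haΔ : a ∈ Δ := hDaΔ ▸ haDa
        have haU : a ∈ U := hΔU haΔ
        have haBC : a ∈ Db ∪ Dc := by
          rcases hor with ⟨h1', h2'⟩ | ⟨h1', h2'⟩ <;> rw [h1', h2']
          · rw [hU] at haU; exact haU
          · rw [hU] at haU; rw [Set.union_comm]; exact haU
        rcases haBC with h | h
        · rcases hDb h with rfl | h'
          · exact hab rfl
          · exact haI h'
        · rcases hDc h with rfl | h'
          · exact hac rfl
          · exact haI h'
      rcases hu' with h1 | h1 | h1 <;> rcases hv' with h2 | h2 | h2 <;>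
        rcases hw' with h3 | h3 | h3
      all_goals first
        | exact hne_uv (h1.trans h2.symm)
        | exact hne_uw (h1.trans h3.symm)
        | exact hne_vw (h2.trans h3.symm)
        | exact contra u v w Du Dv Dw huv huw hu.2 huDu h1 hDvI hDwI (Or.inl ⟨h2, h3⟩)
        | exact contra u v w Du Dv Dw huv huw hu.2 huDu h1 hDvI hDwI (Or.inr ⟨h2, h3⟩)
        | exact contra v u w Dv Du Dw (Ne.symm huv) hvw hv.2 hvDv h2 hDuI hDwI (Or.inl ⟨h1, h3⟩)
        | exact contra v u w Dv Du Dw (Ne.symm huv) hvw hv.2 hvDv h2 hDuI hDwI (Or.inr ⟨h1, h3⟩)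
        | exact contra w u v Dw Du Dv (Ne.symm huw) (Ne.symm hvw) hw.2 hwDw h3 hDuI hDvI (Or.inl ⟨h1, h2⟩)
        | exact contra w u v Dw Du Dv (Ne.symm huw) (Ne.symm hvw) hw.2 hwDw h3 hDuI hDvI (Or.inr ⟨h1, h2⟩)
    have hUcard : U.ncard = I.ncard + (U \ I).ncard := by
      conv_lhs => rw [← Set.union_diff_cancel hIU]
      exact Set.ncard_union_eq Set.disjoint_sdiff_right hIfin (hUfin.diff (t := I))
    have hIrk := BPAux.indep_ncard_le_rk hI.indep
    have hkey : U.ncard + (C₁ ∩ C₂).ncard = C₁.ncard + C₂.ncard := by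
      rw [hU]
      exact Set.ncard_union_add_ncard_inter C₁ C₂ hC₁fin hC₂fin
    have hdisj : Disjoint C₃ (C₁ ∩ C₂) := by
      rw [Set.disjoint_left]
      intro x hx3 hx12
      rcases hC₃Δ hx3 with ⟨_, h⟩ | ⟨_, h⟩
      · exact h hx12.2
      · exact h hx12.1
    have h3card : C₃.ncard + (C₁ ∩ C₂).ncard ≤ U.ncard := by
      rw [← Set.ncard_union_eq hdisj (hUfin.subset (hC₃Δ.trans hΔU))
        (hC₁fin.inter_of_left _)]
      refine Set.ncard_le_ncard ?_ hUfin
      refine Set.union_subset (hC₃Δ.trans hΔU) ?_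
      rw [hU]
      exact Set.inter_subset_left.trans Set.subset_union_left
    have hlow : ∀ C, M.Circuit C → M.rk - k < C.ncard := by
      intro C hC
      obtain ⟨e, he⟩ := hC.1.nonempty
      exact (hpaving e (hC.1.subset_ground he)).2 C hC he
    have hl1 := hlow C₁ hC₁
    have hl2 := hlow C₂ hC₂
    have hl3 := hlow C₃ hC₃
    omega
  · push_neg at h2
    left
    obtain ⟨B, hB⟩ := M.exists_isBase
    have hBcard : B.ncard = M.rk := BPAux.base_ncard_eq_rk hB
    have hBfin : B.Finite := hEfin.subset hB.subset_ground
    have hBne : B.Nonempty := by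
      rw [← Set.ncard_pos hBfin]
      omega
    obtain ⟨e₀, he₀⟩ := hBne
    obtain ⟨C₀, hC₀, -⟩ :=
      BPAux.exists_circuit_of_not_coloop (hB.subset_ground he₀) (hcoloop e₀)
    have hEC : M.E = C₀ := by
      apply subset_antisymm
      · intro e he
        obtain ⟨C, hC, heC⟩ := BPAux.exists_circuit_of_not_coloop he (hcoloop e)
        rwa [h2 C C₀ hC hC₀] at heC
      · exact hC₀.1.subset_ground
    rw [hEC]
    exact hC₀
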